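/- Let g be a 3-Lie algebra and N a Nijenhuis operator with [Nx₁, Nx₂, Nx₃] = 0. Then for any polynomial P(X) = Σ_{i=1}^{n} cᵢ Xⁱ with zero constant term, the operator P(N) is also a Nijenhuis operator. -/

import Mathlib

/-- Deformation of a trilinear bracket `μ` by a linear operator `M`:
`μ_M(x₁,x₂,x₃) = μ(Mx₁,x₂,x₃) + μ(x₁,Mx₂,x₃) + μ(x₁,x₂,Mx₃) − M μ(x₁,x₂,x₃)`. -/
def deform {K : Type*} [Field K] {g : Type*} [AddCommGroup g] [Module K g]
    (M : Module.End K g) (μ : g → g → g → g) : g → g → g → g :=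
  fun x y z => μ (M x) y z + μ x (M y) z + μ x y (M z) - M (μ x y z)

/-- `N` is a Nijenhuis operator for the 3-Lie bracket `b`: conditions (17) and (15). -/
def IsNijenhuis {K : Type*} [Field K] {g : Type*} [AddCommGroup g] [Module K g]
    (b : g →ₗ[K] g →ₗ[K] g →ₗ[K] g) (N : Module.End K g) : Prop :=
  (∀ x y z, N (deform N (fun u v w => b u v w) x y z)
      = b (N x) (N y) z + b (N x) y (N z) + b x (N y) (N z))
  ∧ (∀ x y z, b (N x) (N y) (N z) = 0)

namespace ThreeLieNijAux

open Polynomial Finset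

section Seq

variable {Q : Type*} [CommRing Q]

/-- `(αₙ, βₙ)` with `wⁿ ≡ αₙ + βₙ·w` modulo `w² = s1·w − s2`. -/
def ab (s1 s2 : Q) : ℕ → Q × Q
  | 0 => (1, 0)
  | n+1 => (-s2 * (ab s1 s2 n).2, (ab s1 s2 n).1 + s1 * (ab s1 s2 n).2)

/-- `αₙ` specialised to `s1 = x+y+z`, `s2 = xy+xz+yz`. -/
def alx (x y z : Q) (n : ℕ) : Q := (ab (x+y+z) (x*y+x*z+y*z) n).1

/-- `βₙ` specialised to `s1 = x+y+z`, `s2 = xy+xz+yz`. -/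
def bex (x y z : Q) (n : ℕ) : Q := (ab (x+y+z) (x*y+x*z+y*z) n).2

variable (x y z : Q)

@[simp] lemma alx_zero : alx x y z 0 = 1 := rfl
@[simp] lemma bex_zero : bex x y z 0 = 0 := rfl
@[simp] lemma alx_succ (n : ℕ) :
    alx x y z (n+1) = -(x*y+x*z+y*z) * bex x y z n := rfl
@[simp] lemma bex_succ (n : ℕ) :
    bex x y z (n+1) = alx x y z n + (x+y+z) * bex x y z n := rfl

/-- Power sums: `xⁿ+yⁿ+zⁿ = 2αₙ + βₙ σ₁` for `n ≥ 1`, modulo `xyz = 0`. -/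
lemma pow_sum (h2 : x*y*z = 0) :
    ∀ n : ℕ, x^(n+1) + y^(n+1) + z^(n+1)
      = alx x y z (n+1) + alx x y z (n+1) + bex x y z (n+1) * (x+y+z) := by
  have key : ∀ n : ℕ,
      (x^(n+1) + y^(n+1) + z^(n+1)
        = alx x y z (n+1) + alx x y z (n+1) + bex x y z (n+1) * (x+y+z)) ∧
      (x^(n+2) + y^(n+2) + z^(n+2)
        = alx x y z (n+2) + alx x y z (n+2) + bex x y z (n+2) * (x+y+z)) := by
    intro n
    induction n with
    | zero =>
      constructor
      · simp only [alx_succ, bex_succ, alx_zero, bex_zero]; ring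
      · simp only [alx_succ, bex_succ, alx_zero, bex_zero]; ring
    | succ k ih =>
      refine ⟨ih.2, ?_⟩
      have newton : x^(k+3) + y^(k+3) + z^(k+3)
          = (x+y+z) * (x^(k+2) + y^(k+2) + z^(k+2))
            - (x*y+x*z+y*z) * (x^(k+1) + y^(k+1) + z^(k+1))
            + (x*y*z) * (x^k + y^k + z^k) := by ring
      rw [newton, h2, zero_mul, add_zero, ih.1, ih.2]
      simp only [alx_succ, bex_succ]
      ring
  exact fun n => (key n).1

/-- Diagonal pair sums. -/
lemma pair_diag (h2 : x*y*z = 0) :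
    ∀ n : ℕ, x^(n+1)*y^(n+1) + x^(n+1)*z^(n+1) + y^(n+1)*z^(n+1)
      = alx x y z (n+1) * alx x y z (n+1)
        + alx x y z (n+1) * bex x y z (n+1) * (x+y+z)
        + bex x y z (n+1) * bex x y z (n+1) * (x*y+x*z+y*z) := by
  intro n
  induction n with
  | zero => simp only [alx_succ, bex_succ, alx_zero, bex_zero]; ring
  | succ k ih =>
    have step : x^(k+2)*y^(k+2) + x^(k+2)*z^(k+2) + y^(k+2)*z^(k+2)
        = (x*y+x*z+y*z) * (x^(k+1)*y^(k+1) + x^(k+1)*z^(k+1) + y^(k+1)*z^(k+1))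
          - (x*y*z) * (x^(k+1)*y^k + x^k*y^(k+1) + x^(k+1)*z^k + x^k*z^(k+1)
              + y^(k+1)*z^k + y^k*z^(k+1)) := by ring
    rw [step, h2, zero_mul, sub_zero, ih]
    simp only [alx_succ, bex_succ]
    ring

/-- Symmetrised mixed pair sums. -/
lemma pair_sym (h2 : x*y*z = 0) :
    ∀ n m : ℕ,
      x^(n+1)*y^(m+1) + x^(m+1)*y^(n+1) + x^(n+1)*z^(m+1) + x^(m+1)*z^(n+1)
        + y^(n+1)*z^(m+1) + y^(m+1)*z^(n+1)
      = (alx x y z (n+1) * alx x y z (m+1)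
          + alx x y z (n+1) * bex x y z (m+1) * (x+y+z)
          + bex x y z (n+1) * bex x y z (m+1) * (x*y+x*z+y*z))
        + (alx x y z (m+1) * alx x y z (n+1)
          + alx x y z (m+1) * bex x y z (n+1) * (x+y+z)
          + bex x y z (m+1) * bex x y z (n+1) * (x*y+x*z+y*z)) := by
  have base : ∀ m : ℕ,
      x^(0+1)*y^(m+1) + x^(m+1)*y^(0+1) + x^(0+1)*z^(m+1) + x^(m+1)*z^(0+1)
        + y^(0+1)*z^(m+1) + y^(m+1)*z^(0+1)
      = (alx x y z (0+1) * alx x y z (m+1)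
          + alx x y z (0+1) * bex x y z (m+1) * (x+y+z)
          + bex x y z (0+1) * bex x y z (m+1) * (x*y+x*z+y*z))
        + (alx x y z (m+1) * alx x y z (0+1)
          + alx x y z (m+1) * bex x y z (0+1) * (x+y+z)
          + bex x y z (m+1) * bex x y z (0+1) * (x*y+x*z+y*z)) := by
    intro m
    have expand : x^(0+1)*y^(m+1) + x^(m+1)*y^(0+1) + x^(0+1)*z^(m+1) + x^(m+1)*z^(0+1)
        + y^(0+1)*z^(m+1) + y^(m+1)*z^(0+1)
        = (x+y+z) * (x^(m+1)+y^(m+1)+z^(m+1)) - (x^(m+2)+y^(m+2)+z^(m+2)) := by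
      ring
    rw [expand, pow_sum x y z h2 m, pow_sum x y z h2 (m+1)]
    simp only [alx_succ, bex_succ, alx_zero, bex_zero]
    ring
  intro n
  induction n with
  | zero => exact base
  | succ k ih =>
    intro m
    match m with
    | 0 =>
      have := base (k+1)
      linear_combination this
    | m'+1 =>
      have step :
          x^(k+2)*y^(m'+2) + x^(m'+2)*y^(k+2) + x^(k+2)*z^(m'+2) + x^(m'+2)*z^(k+2)
            + y^(k+2)*z^(m'+2) + y^(m'+2)*z^(k+2)
          = (x*y+x*z+y*z) *
              (x^(k+1)*y^(m'+1) + x^(m'+1)*y^(k+1) + x^(k+1)*z^(m'+1) + x^(m'+1)*z^(k+1)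
                + y^(k+1)*z^(m'+1) + y^(m'+1)*z^(k+1))
            - (x*y*z) *
              (x^(k+1)*y^(m') + x^(k)*y^(m'+1) + x^(m'+1)*y^(k) + x^(m')*y^(k+1)
                + x^(k+1)*z^(m') + x^(k)*z^(m'+1) + x^(m'+1)*z^(k) + x^(m')*z^(k+1)
                + y^(k+1)*z^(m') + y^(k)*z^(m'+1) + y^(m'+1)*z^(k) + y^(m')*z^(k+1)) := by
        ring
      rw [step, h2, zero_mul, sub_zero, ih m']
      simp only [alx_succ, bex_succ]
      ring

end Seq

section Core

variable {K : Type*} [CommRing K] {Q : Type*} [CommRing Q] [Algebra K Q]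

lemma w_pow (w x y z : Q) (h1 : w*w = w*(x+y+z) - (x*y+x*z+y*z)) :
    ∀ n : ℕ, w^n = alx x y z n + bex x y z n * w := by
  intro n
  induction n with
  | zero => simp
  | succ k ih =>
    rw [pow_succ, ih]
    simp only [alx_succ, bex_succ]
    linear_combination (bex x y z k) * h1

/-- Triple product vanishing. -/
lemma core2 (x y z : Q) (h2 : x*y*z = 0) (P : Polynomial K) (hP : P.coeff 0 = 0) :
    aeval x P * aeval y P * aeval z P = 0 := by
  have hdiv : Polynomial.X * P.divX = P := by
    have := Polynomial.X_mul_divX_add P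
    rwa [hP, map_zero, add_zero] at this
  rw [← hdiv]
  simp only [map_mul, aeval_X]
  linear_combination (aeval x P.divX * aeval y P.divX * aeval z P.divX) * h2

/-- The central certificate identity. -/
lemma core1 (w x y z : Q) (h1 : w*w = w*(x+y+z) - (x*y+x*z+y*z)) (h2 : x*y*z = 0)
    (P : Polynomial K) (hP : P.coeff 0 = 0) :
    aeval w P * (aeval x P + aeval y P + aeval z P) - aeval w P * aeval w P
      - (aeval x P * aeval y P + aeval x P * aeval z P + aeval y P * aeval z P) = 0 := by
  classical
  set r : Finset ℕ := Finset.range (P.natDegree + 1) with hr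
  set cf : ℕ → Q := fun i => algebraMap K Q (P.coeff i) with hcf
  have hc0 : cf 0 = 0 := by rw [hcf]; simp [hP]
  have hsr : ∀ u : Q, aeval u P = ∑ i ∈ r, cf i * u^i := by
    intro u
    rw [aeval_eq_sum_range]
    exact Finset.sum_congr rfl fun i _ => Algebra.smul_def _ _
  set cA : Q := ∑ i ∈ r, cf i * alx x y z i with hcA
  set cB : Q := ∑ i ∈ r, cf i * bex x y z i with hcB
  have hFw : aeval w P = cA + cB * w := by
    rw [hsr w, hcA, hcB, Finset.sum_mul, ← Finset.sum_add_distrib]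
    refine Finset.sum_congr rfl fun i _ => ?_
    rw [w_pow w x y z h1 i]; ring
  have hE1 : aeval x P + aeval y P + aeval z P = cA + cA + cB * (x+y+z) := by
    rw [hsr x, hsr y, hsr z, hcA, hcB, Finset.sum_mul, ← Finset.sum_add_distrib,
      ← Finset.sum_add_distrib, ← Finset.sum_add_distrib, ← Finset.sum_add_distrib]
    refine Finset.sum_congr rfl fun i _ => ?_
    match i with
    | 0 => rw [hc0]; ring
    | n+1 => linear_combination (cf (n+1)) * pow_sum x y z h2 n
  have hprod : ∀ u v : Q, aeval u P * aeval v P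
      = ∑ p ∈ r ×ˢ r, cf p.1 * cf p.2 * (u^p.1 * v^p.2) := by
    intro u v
    rw [hsr u, hsr v, Finset.sum_mul_sum, Finset.sum_product]
    exact Finset.sum_congr rfl fun i _ => Finset.sum_congr rfl fun j _ => by ring
  have hAA : cA * cA = ∑ p ∈ r ×ˢ r,
      cf p.1 * cf p.2 * (alx x y z p.1 * alx x y z p.2) := by
    rw [hcA, Finset.sum_mul_sum, Finset.sum_product]
    exact Finset.sum_congr rfl fun i _ => Finset.sum_congr rfl fun j _ => by ring
  have hAB : cA * cB * (x+y+z) = ∑ p ∈ r ×ˢ r,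
      cf p.1 * cf p.2 * (alx x y z p.1 * bex x y z p.2 * (x+y+z)) := by
    rw [hcA, hcB, Finset.sum_mul_sum, Finset.sum_mul, Finset.sum_product]
    refine Finset.sum_congr rfl fun i _ => ?_
    rw [Finset.sum_mul]
    exact Finset.sum_congr rfl fun j _ => by ring
  have hBB : cB * cB * (x*y+x*z+y*z) = ∑ p ∈ r ×ˢ r,
      cf p.1 * cf p.2 * (bex x y z p.1 * bex x y z p.2 * (x*y+x*z+y*z)) := by
    rw [hcB, Finset.sum_mul_sum, Finset.sum_mul, Finset.sum_product]
    refine Finset.sum_congr rfl fun i _ => ?_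
    rw [Finset.sum_mul]
    exact Finset.sum_congr rfl fun j _ => by ring
  have hsum0 : ∑ p ∈ r ×ˢ r,
      (cf p.1 * cf p.2 *
        (x^p.1 * y^p.2 + x^p.1 * z^p.2 + y^p.1 * z^p.2
          - (alx x y z p.1 * alx x y z p.2 + alx x y z p.1 * bex x y z p.2 * (x+y+z)
              + bex x y z p.1 * bex x y z p.2 * (x*y+x*z+y*z)))) = 0 := by
    refine Finset.sum_involution (fun p _ => (p.2, p.1)) ?_ ?_ ?_ ?_
    · rintro ⟨i, j⟩ -
      match i, j with
      | 0, j => rw [hc0]; ring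
      | i+1, 0 => rw [hc0]; ring
      | n+1, m+1 =>
        linear_combination (cf (n+1) * cf (m+1)) * pair_sym x y z h2 n m
    · rintro ⟨i, j⟩ - hf
      intro heq
      apply hf
      have hji : j = i := (Prod.mk.injEq _ _ _ _).mp heq |>.1
      subst hji
      match j with
      | 0 => rw [hc0]; ring
      | n+1 => linear_combination (cf (n+1) * cf (n+1)) * pair_diag x y z h2 n
    · rintro ⟨i, j⟩ hp
      rw [Finset.mem_product] at hp ⊢
      exact ⟨hp.2, hp.1⟩
    · rintro ⟨i, j⟩ -; rfl
  have hsplit : ∑ p ∈ r ×ˢ r,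
      (cf p.1 * cf p.2 *
        (x^p.1 * y^p.2 + x^p.1 * z^p.2 + y^p.1 * z^p.2
          - (alx x y z p.1 * alx x y z p.2 + alx x y z p.1 * bex x y z p.2 * (x+y+z)
              + bex x y z p.1 * bex x y z p.2 * (x*y+x*z+y*z))))
      = ((∑ p ∈ r ×ˢ r, cf p.1 * cf p.2 * (x^p.1 * y^p.2))
          + (∑ p ∈ r ×ˢ r, cf p.1 * cf p.2 * (x^p.1 * z^p.2))
          + (∑ p ∈ r ×ˢ r, cf p.1 * cf p.2 * (y^p.1 * z^p.2)))
        - ((∑ p ∈ r ×ˢ r, cf p.1 * cf p.2 * (alx x y z p.1 * alx x y z p.2))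
          + (∑ p ∈ r ×ˢ r, cf p.1 * cf p.2 * (alx x y z p.1 * bex x y z p.2 * (x+y+z)))
          + (∑ p ∈ r ×ˢ r, cf p.1 * cf p.2 * (bex x y z p.1 * bex x y z p.2 * (x*y+x*z+y*z)))) := by
    rw [← Finset.sum_add_distrib, ← Finset.sum_add_distrib, ← Finset.sum_add_distrib,
      ← Finset.sum_add_distrib, ← Finset.sum_sub_distrib]
    exact Finset.sum_congr rfl fun p _ => by ring
  have hE2 : aeval x P * aeval y P + aeval x P * aeval z P + aeval y P * aeval z P
      = cA * cA + cA * cB * (x+y+z) + cB * cB * (x*y+x*z+y*z) := by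
    linear_combination hprod x y + hprod x z + hprod y z - hAA - hAB - hBB
      + hsplit.symm.trans hsum0
  rw [hFw, hE1, hE2]
  linear_combination (-(cB * cB)) * h1

end Core

section Endo

variable {K : Type*} [CommRing K] {g : Type*} [AddCommGroup g] [Module K g]

/-- Post-composition with `N` as an endomorphism of trilinear-map space. -/
def postOp (N : Module.End K g) : Module.End K (g → g → g → g) where
  toFun T := fun a b c => N (T a b c)
  map_add' T T' := by funext a b c; simp
  map_smul' t T := by funext a b c; simp

/-- Pre-composition with `N` in the first slot. -/
def pre1Op (N : Module.End K g) : Module.End K (g → g → g → g) where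
  toFun T := fun a b c => T (N a) b c
  map_add' T T' := rfl
  map_smul' t T := rfl

/-- Pre-composition with `N` in the second slot. -/
def pre2Op (N : Module.End K g) : Module.End K (g → g → g → g) where
  toFun T := fun a b c => T a (N b) c
  map_add' T T' := rfl
  map_smul' t T := rfl

/-- Pre-composition with `N` in the third slot. -/
def pre3Op (N : Module.End K g) : Module.End K (g → g → g → g) where
  toFun T := fun a b c => T a b (N c)
  map_add' T T' := rfl
  map_smul' t T := rfl

variable (N : Module.End K g)

lemma postOp_pow (n : ℕ) : ∀ T : g → g → g → g,
    ((postOp N)^n) T = fun a b c => (N^n) (T a b c) := by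
  induction n with
  | zero => intro T; simp
  | succ k ih =>
    intro T
    rw [pow_succ', Module.End.mul_apply, ih]
    funext a b c
    show N ((N^k) (T a b c)) = (N^(k+1)) (T a b c)
    rw [pow_succ', Module.End.mul_apply]

lemma pre1Op_pow (n : ℕ) : ∀ T : g → g → g → g,
    ((pre1Op N)^n) T = fun a b c => T ((N^n) a) b c := by
  induction n with
  | zero => intro T; simp
  | succ k ih =>
    intro T
    rw [pow_succ', Module.End.mul_apply, ih]
    funext a b c
    show T ((N^k) (N a)) b c = T ((N^(k+1)) a) b c
    rw [pow_succ, Module.End.mul_apply]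

lemma pre2Op_pow (n : ℕ) : ∀ T : g → g → g → g,
    ((pre2Op N)^n) T = fun a b c => T a ((N^n) b) c := by
  induction n with
  | zero => intro T; simp
  | succ k ih =>
    intro T
    rw [pow_succ', Module.End.mul_apply, ih]
    funext a b c
    show T a ((N^k) (N b)) c = T a ((N^(k+1)) b) c
    rw [pow_succ, Module.End.mul_apply]

lemma pre3Op_pow (n : ℕ) : ∀ T : g → g → g → g,
    ((pre3Op N)^n) T = fun a b c => T a b ((N^n) c) := by
  induction n with
  | zero => intro T; simp
  | succ k ih =>
    intro T
    rw [pow_succ', Module.End.mul_apply, ih]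
    funext a b c
    show T a b ((N^k) (N c)) = T a b ((N^(k+1)) c)
    rw [pow_succ, Module.End.mul_apply]

lemma aeval_postOp_apply (P : Polynomial K) (T : g → g → g → g) :
    (aeval (postOp N) P) T = fun a b c => (aeval N P) (T a b c) := by
  induction P using Polynomial.induction_on' with
  | add p q hp hq =>
    funext a b c
    simp only [map_add, LinearMap.add_apply, Pi.add_apply, hp, hq]
  | monomial n t =>
    funext a b c
    simp only [aeval_monomial, Module.End.mul_apply, postOp_pow,
      Module.algebraMap_end_apply, Pi.smul_apply]

lemma aeval_pre1_apply (P : Polynomial K) (T : g → g → g → g)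
    (hadd : ∀ u v b c, T (u+v) b c = T u b c + T v b c)
    (hsm : ∀ (t : K) u b c, T (t • u) b c = t • T u b c) :
    (aeval (pre1Op N) P) T = fun a b c => T ((aeval N P) a) b c := by
  induction P using Polynomial.induction_on' with
  | add p q hp hq =>
    funext a b c
    simp only [map_add, LinearMap.add_apply, Pi.add_apply, hp, hq, hadd]
  | monomial n t =>
    funext a b c
    simp only [aeval_monomial, Module.End.mul_apply, pre1Op_pow,
      Module.algebraMap_end_apply, Pi.smul_apply, hsm]

lemma aeval_pre2_apply (P : Polynomial K) (T : g → g → g → g)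
    (hadd : ∀ a u v c, T a (u+v) c = T a u c + T a v c)
    (hsm : ∀ (t : K) a u c, T a (t • u) c = t • T a u c) :
    (aeval (pre2Op N) P) T = fun a b c => T a ((aeval N P) b) c := by
  induction P using Polynomial.induction_on' with
  | add p q hp hq =>
    funext a b c
    simp only [map_add, LinearMap.add_apply, Pi.add_apply, hp, hq, hadd]
  | monomial n t =>
    funext a b c
    simp only [aeval_monomial, Module.End.mul_apply, pre2Op_pow,
      Module.algebraMap_end_apply, Pi.smul_apply, hsm]

lemma aeval_pre3_apply (P : Polynomial K) (T : g → g → g → g)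
    (hadd : ∀ a b u v, T a b (u+v) = T a b u + T a b v)
    (hsm : ∀ (t : K) a b u, T a b (t • u) = t • T a b u) :
    (aeval (pre3Op N) P) T = fun a b c => T a b ((aeval N P) c) := by
  induction P using Polynomial.induction_on' with
  | add p q hp hq =>
    funext a b c
    simp only [map_add, LinearMap.add_apply, Pi.add_apply, hp, hq, hadd]
  | monomial n t =>
    funext a b c
    simp only [aeval_monomial, Module.End.mul_apply, pre3Op_pow,
      Module.algebraMap_end_apply, Pi.smul_apply, hsm]

end Endo

end ThreeLieNijAux

open Polynomial ThreeLieNijAux in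
set_option maxHeartbeats 3200000 in
set_option synthInstance.maxHeartbeats 400000 in
lemma nij_aux_main
    {K : Type*} [Field K] {g : Type*} [AddCommGroup g] [Module K g]
    (b : g →ₗ[K] g →ₗ[K] g →ₗ[K] g)
    (N : Module.End K g)
    (h17 : ∀ x y z, N (b (N x) y z + b x (N y) z + b x y (N z) - N (b x y z))
      = b (N x) (N y) z + b (N x) y (N z) + b x (N y) (N z))
    (h15 : ∀ x y z, b (N x) (N y) (N z) = 0)
    (P : Polynomial K) (hP : P.coeff 0 = 0) :
    (∀ x y z, (aeval N P) (b ((aeval N P) x) y z + b x ((aeval N P) y) z + b x y ((aeval N P) z)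
        - (aeval N P) (b x y z))
      = b ((aeval N P) x) ((aeval N P) y) z + b ((aeval N P) x) y ((aeval N P) z)
        + b x ((aeval N P) y) ((aeval N P) z))
    ∧ (∀ x y z, b ((aeval N P) x) ((aeval N P) y) ((aeval N P) z) = 0) := by
  classical
  set M : Module.End K g := Polynomial.aeval N P with hM
  set Wo : Module.End K (g → g → g → g) := postOp N with hWo
  set Xo : Module.End K (g → g → g → g) := pre1Op N with hXo
  set Yo : Module.End K (g → g → g → g) := pre2Op N with hYo
  set Zo : Module.End K (g → g → g → g) := pre3Op N with hZo
  set sgen : Set (Module.End K (g → g → g → g)) := {Wo, Xo, Yo, Zo} with hsgen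
  have hcomm : ∀ a ∈ sgen, ∀ b' ∈ sgen, a * b' = b' * a := by
    intro a ha b' hb'
    simp only [hsgen, Set.mem_insert_iff, Set.mem_singleton_iff] at ha hb'
    rcases ha with rfl | rfl | rfl | rfl <;> rcases hb' with rfl | rfl | rfl | rfl <;>
      exact LinearMap.ext fun T => rfl
  letI : CommRing (Algebra.adjoin K sgen) := Algebra.adjoinCommRingOfComm K hcomm
  set w' : Algebra.adjoin K sgen := ⟨Wo, Algebra.subset_adjoin (by simp [hsgen])⟩ with hw'
  set x' : Algebra.adjoin K sgen := ⟨Xo, Algebra.subset_adjoin (by simp [hsgen])⟩ with hx'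
  set y' : Algebra.adjoin K sgen := ⟨Yo, Algebra.subset_adjoin (by simp [hsgen])⟩ with hy'
  set z' : Algebra.adjoin K sgen := ⟨Zo, Algebra.subset_adjoin (by simp [hsgen])⟩ with hz'
  set ρ' : Algebra.adjoin K sgen :=
    w' * (x' + y' + z') - w' * w' - (x' * y' + x' * z' + y' * z') with hρ'
  set χ' : Algebra.adjoin K sgen := x' * y' * z' with hχ'
  set J : Ideal (Algebra.adjoin K sgen) := Ideal.span {ρ', χ'} with hJ
  set π : Algebra.adjoin K sgen →ₐ[K] (Algebra.adjoin K sgen ⧸ J) := Ideal.Quotient.mkₐ K J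
    with hπ
  have hπρ : π ρ' = 0 :=
    Ideal.Quotient.eq_zero_iff_mem.mpr (Ideal.subset_span (Set.mem_insert _ _))
  have hπχ : π χ' = 0 :=
    Ideal.Quotient.eq_zero_iff_mem.mpr
      (Ideal.subset_span (Set.mem_insert_of_mem _ rfl))
  have h1Q : π w' * π w' = π w' * (π x' + π y' + π z')
      - (π x' * π y' + π x' * π z' + π y' * π z') := by
    have h := hπρ
    rw [hρ'] at h
    simp only [map_sub, map_add, map_mul] at h
    linear_combination -h
  have h2Q : π x' * π y' * π z' = 0 := by
    have h := hπχ
    rw [hχ'] at h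
    simp only [map_mul] at h
    exact h
  have hcoreA := core1 (K := K) (π w') (π x') (π y') (π z') h1Q h2Q P hP
  have hcoreB := core2 (K := K) (π x') (π y') (π z') h2Q P hP
  rw [Polynomial.aeval_algHom_apply π w' P, Polynomial.aeval_algHom_apply π x' P,
      Polynomial.aeval_algHom_apply π y' P, Polynomial.aeval_algHom_apply π z' P] at hcoreA
  rw [Polynomial.aeval_algHom_apply π x' P, Polynomial.aeval_algHom_apply π y' P,
      Polynomial.aeval_algHom_apply π z' P] at hcoreB
  have hmemA : (aeval w' P * (aeval x' P + aeval y' P + aeval z' P)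
      - aeval w' P * aeval w' P
      - (aeval x' P * aeval y' P + aeval x' P * aeval z' P + aeval y' P * aeval z' P)) ∈ J := by
    rw [← Ideal.Quotient.eq_zero_iff_mem]
    show π _ = 0
    simp only [map_sub, map_add, map_mul]
    linear_combination hcoreA
  have hmemB : (aeval x' P * aeval y' P * aeval z' P) ∈ J := by
    rw [← Ideal.Quotient.eq_zero_iff_mem]
    show π _ = 0
    simp only [map_mul]
    exact hcoreB
  obtain ⟨qA, rA, hA⟩ := Ideal.mem_span_pair.mp hmemA
  obtain ⟨qB, rB, hB⟩ := Ideal.mem_span_pair.mp hmemB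
  set V : Algebra.adjoin K sgen →ₐ[K] Module.End K (g → g → g → g) :=
    (Algebra.adjoin K sgen).val with hV
  set btil : g → g → g → g := fun a b' c => b a b' c with hbtil
  have hρ0 : V ρ' btil = 0 := by
    have hVρ : V ρ' = Wo * (Xo + Yo + Zo) - Wo * Wo - (Xo * Yo + Xo * Zo + Yo * Zo) := by
      rw [hρ']; simp only [map_sub, map_add, map_mul]; rfl
    rw [hVρ]
    funext u v t
    show N (btil (N u) v t + btil u (N v) t + btil u v (N t)) - N (N (btil u v t))
        - (btil (N u) (N v) t + btil (N u) v (N t) + btil u (N v) (N t)) = 0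
    rw [sub_eq_zero]
    have h := h17 u v t
    rw [map_sub] at h
    exact h
  have hχ0 : V χ' btil = 0 := by
    have hVχ : V χ' = Xo * Yo * Zo := by rw [hχ']; simp only [map_mul]; rfl
    rw [hVχ]
    funext u v t
    exact h15 u v t
  -- bridging
  have hXb : (aeval Xo P) btil = fun a b' c => b (M a) b' c := by
    refine aeval_pre1_apply N P btil (fun u v b2 c2 => ?_) (fun t u b2 c2 => ?_) <;>
      simp [hbtil]
  have hYb : (aeval Yo P) btil = fun a b' c => b a (M b') c := by
    refine aeval_pre2_apply N P btil (fun a u v c2 => ?_) (fun t a u c2 => ?_) <;>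
      simp [hbtil]
  have hZb : (aeval Zo P) btil = fun a b' c => b a b' (M c) := by
    refine aeval_pre3_apply N P btil (fun a b2 u v => ?_) (fun t a b2 u => ?_) <;>
      simp [hbtil]
  have hXYb : (aeval Xo P) ((aeval Yo P) btil) = fun a b' c => b (M a) (M b') c := by
    rw [hYb]
    refine aeval_pre1_apply N P _ (fun u v b2 c2 => ?_) (fun t u b2 c2 => ?_) <;> simp
  have hXZb : (aeval Xo P) ((aeval Zo P) btil) = fun a b' c => b (M a) b' (M c) := by
    rw [hZb]
    refine aeval_pre1_apply N P _ (fun u v b2 c2 => ?_) (fun t u b2 c2 => ?_) <;> simp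
  have hYZb : (aeval Yo P) ((aeval Zo P) btil) = fun a b' c => b a (M b') (M c) := by
    rw [hZb]
    refine aeval_pre2_apply N P _ (fun a u v c2 => ?_) (fun t a u c2 => ?_) <;> simp
  have hWall : ∀ T : g → g → g → g, (aeval Wo P) T = fun a b' c => M (T a b' c) :=
    fun T => aeval_postOp_apply N P T
  -- aeval through V
  have hVw : V (aeval w' P) = aeval Wo P := by
    rw [← Polynomial.aeval_algHom_apply V w' P]; rfl
  have hVx : V (aeval x' P) = aeval Xo P := by
    rw [← Polynomial.aeval_algHom_apply V x' P]; rfl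
  have hVy : V (aeval y' P) = aeval Yo P := by
    rw [← Polynomial.aeval_algHom_apply V y' P]; rfl
  have hVz : V (aeval z' P) = aeval Zo P := by
    rw [← Polynomial.aeval_algHom_apply V z' P]; rfl
  -- key equation 1
  have hXYZb : (aeval Xo P) (fun a b' c => b a (M b') (M c))
      = fun a b' c => b (M a) (M b') (M c) := by
    refine aeval_pre1_apply N P _ (fun u v b2 c2 => ?_) (fun t u b2 c2 => ?_) <;> simp
  have hA' := congrArg (fun e => V e btil) hA
  simp only [map_add, map_mul, map_sub, LinearMap.add_apply, LinearMap.sub_apply,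
    Module.End.mul_apply, hρ0, hχ0, map_zero, add_zero, hVw, hVx, hVy, hVz] at hA'
  rw [hXYb, hXZb, hYZb] at hA'
  rw [hXb, hYb, hZb] at hA'
  simp only [hWall] at hA'
  have hB' := congrArg (fun e => V e btil) hB
  simp only [map_add, map_mul, LinearMap.add_apply, Module.End.mul_apply,
    hρ0, hχ0, map_zero, add_zero, hVx, hVy, hVz] at hB'
  rw [hYZb, hXYZb] at hB'
  constructor
  · intro u v t
    have h := congrFun (congrFun (congrFun hA' u) v) t
    simp only [Pi.sub_apply, Pi.add_apply, Pi.zero_apply] at h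
    simp only [hbtil] at h
    rw [map_sub, map_add, map_add]
    exact sub_eq_zero.mp h.symm
  · intro u v t
    have h := congrFun (congrFun (congrFun hB' u) v) t
    simp only [Pi.zero_apply] at h
    exact h.symm

/-- Corollary 4.10: for a Nijenhuis operator `N` and any polynomial
`P(X) = Σ_{i=1}^n cᵢ Xⁱ` with zero constant term, `P(N)` is also a Nijenhuis operator. -/
theorem threeLie_nijenhuis_polynomial
    {K : Type*} [Field K] {g : Type*} [AddCommGroup g] [Module K g]
    (b : g →ₗ[K] g →ₗ[K] g →ₗ[K] g)
    (hb1 : ∀ x y z, b x y z = - b y x z)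
    (hb2 : ∀ x y z, b x y z = - b x z y)
    (hfi : ∀ x₁ x₂ y₁ y₂ y₃, b x₁ x₂ (b y₁ y₂ y₃)
      = b (b x₁ x₂ y₁) y₂ y₃ + b y₁ (b x₁ x₂ y₂) y₃ + b y₁ y₂ (b x₁ x₂ y₃))
    (N : Module.End K g) (hN : IsNijenhuis b N)
    (P : Polynomial K) (hP : P.coeff 0 = 0) :
    IsNijenhuis b (Polynomial.aeval N P) := by
  obtain ⟨h17, h15⟩ := hN
  obtain ⟨c1, c2⟩ := nij_aux_main b N
    (fun x y z => by simpa [deform] using h17 x y z) h15 P hP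
  refine ⟨fun x y z => ?_, c2⟩
  simpa [deform] using c1 x y z
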